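/- Let n be a positive integer and B an N×N nonnegative real matrix. Then B = K^n for some inverse M-matrix K if and only if there exist a real number c > 0 and a nonnegative matrix P with spectral radius ρ(P) < 1 such that B = c · Σ_{k=0}^{∞} C(n+k−1, k) · P^k, where C(n+k−1, k) is the binomial coefficient and the series converges in the space of N×N real matrices. -/

import Mathlib

open Matrix

/-- A real square matrix is (entrywise) nonnegative if all of its entries are nonnegative. -/
def IsNonnegMatrix {ι : Type*} (B : Matrix ι ι ℝ) : Prop :=
  ∀ i j, 0 ≤ B i j

/-- A Z-matrix is a real square matrix all of whose off-diagonal entries are nonpositive. -/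
def IsZMatrix {ι : Type*} (Q : Matrix ι ι ℝ) : Prop :=
  ∀ i j, i ≠ j → Q i j ≤ 0

/-- A nonnegative matrix `B` is infinitely divisible if for every positive integer `n`
there exists a nonnegative matrix `K` with `K ^ n = B`. -/
def IsInfinitelyDivisible {ι : Type*} [Fintype ι] [DecidableEq ι] (B : Matrix ι ι ℝ) : Prop :=
  ∀ n : ℕ, 0 < n → ∃ K : Matrix ι ι ℝ, IsNonnegMatrix K ∧ K ^ n = B

/-- `B` is strongly infinitely divisible if it is infinitely divisible and `det B > 0`. -/
def IsStronglyInfinitelyDivisible {ι : Type*} [Fintype ι] [DecidableEq ι]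
    (B : Matrix ι ι ℝ) : Prop :=
  IsInfinitelyDivisible B ∧ 0 < B.det

/-- An inverse M-matrix is an invertible nonnegative matrix whose inverse is a Z-matrix. -/
def IsInverseMMatrix {ι : Type*} [Fintype ι] [DecidableEq ι] (K : Matrix ι ι ℝ) : Prop :=
  IsUnit K.det ∧ IsNonnegMatrix K ∧ IsZMatrix K⁻¹

/-- A stochastic matrix is a nonnegative square matrix each of whose rows sums to `1`. -/
def IsStochasticMatrix {ι : Type*} [Fintype ι] (P : Matrix ι ι ℝ) : Prop :=
  IsNonnegMatrix P ∧ ∀ i, ∑ j, P i j = 1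

/-- An intensity matrix is a real square matrix whose off-diagonal entries are nonnegative
and each of whose rows sums to `0`. -/
def IsIntensityMatrix {ι : Type*} [Fintype ι] (R : Matrix ι ι ℝ) : Prop :=
  (∀ i j, i ≠ j → 0 ≤ R i j) ∧ ∀ i, ∑ j, R i j = 0

section Aux

attribute [local instance] Matrix.linftyOpNormedAddCommGroup Matrix.linftyOpNormedRing
  Matrix.linftyOpNormedAlgebra Matrix.linftyOpNormedSpace

variable {N : ℕ}

open Filter Finset
open scoped NNReal ENNReal

/-- Evaluation of the characteristic polynomial. -/
lemma aux_eval_charpoly (A : Matrix (Fin N) (Fin N) ℂ) (μ : ℂ) :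
    A.charpoly.eval μ = (μ • (1 : Matrix (Fin N) (Fin N) ℂ) - A).det := by
  rw [Matrix.charpoly, ← Polynomial.coe_evalRingHom, RingHom.map_det]
  congr 1
  ext i j
  by_cases h : i = j
  · subst h
    simp [Matrix.charmatrix_apply, Matrix.one_apply, Matrix.smul_apply, Matrix.sub_apply]
  · simp [Matrix.charmatrix_apply, Matrix.one_apply_ne h, Matrix.smul_apply, Matrix.sub_apply,
      Matrix.diagonal_apply_ne _ h]

lemma aux_mem_roots_iff (A : Matrix (Fin N) (Fin N) ℂ) (μ : ℂ) :
    μ ∈ A.charpoly.roots ↔ (μ • (1 : Matrix (Fin N) (Fin N) ℂ) - A).det = 0 := by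
  rw [Polynomial.mem_roots (A.charpoly_monic.ne_zero), Polynomial.IsRoot,
    aux_eval_charpoly]

lemma aux_spectrum_subset (A : Matrix (Fin N) (Fin N) ℂ) (μ : ℂ) (hμ : μ ∈ spectrum ℂ A) :
    μ ∈ A.charpoly.roots := by
  rw [spectrum.mem_iff, Algebra.algebraMap_eq_smul_one] at hμ
  rw [aux_mem_roots_iff]
  by_contra hdet
  exact hμ ((Matrix.isUnit_iff_isUnit_det _).mpr (isUnit_iff_ne_zero.mpr hdet))

/-- Geometric bound on powers from the root condition, complex case. -/
lemma aux_pow_bound (A : Matrix (Fin N) (Fin N) ℂ)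
    (h : ∀ μ ∈ A.charpoly.roots, ‖μ‖ < 1) :
    ∃ r : ℝ, 0 < r ∧ r < 1 ∧ ∃ C : ℝ, 0 ≤ C ∧ ∀ k : ℕ, ‖A ^ k‖ ≤ C * r ^ k := by
  classical
  set t : ℝ≥0 := A.charpoly.roots.toFinset.sup fun μ => ‖μ‖₊ with ht_def
  have ht1 : t < 1 := by
    rw [ht_def]
    refine Finset.sup_lt_iff (by exact zero_lt_one) |>.mpr fun μ hμ => ?_
    have := h μ (Multiset.mem_toFinset.mp hμ)
    rw [← NNReal.coe_lt_coe]
    simpa using this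
  set r : ℝ≥0 := (t + 1) / 2 with hr_def
  have ht1' : (t:ℝ) < 1 := by exact_mod_cast ht1
  have htr : t < r := by
    rw [← NNReal.coe_lt_coe]
    rw [hr_def]
    push_cast
    linarith
  have hr1 : r < 1 := by
    rw [← NNReal.coe_lt_coe]
    rw [hr_def]
    push_cast
    linarith
  have hr0 : (0:ℝ) < r := by
    rw [hr_def]
    positivity
  have hsp : spectralRadius ℂ A ≤ (t : ℝ≥0∞) := by
    refine iSup₂_le fun μ hμ => ?_
    exact_mod_cast Finset.le_sup (f := fun μ => ‖μ‖₊)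
      (Multiset.mem_toFinset.mpr (aux_spectrum_subset A μ hμ))
  have hlt : spectralRadius ℂ A < (r : ℝ≥0∞) :=
    lt_of_le_of_lt hsp (by exact_mod_cast htr)
  have htend := spectrum.pow_nnnorm_pow_one_div_tendsto_nhds_spectralRadius A
  have hev := htend.eventually_lt_const hlt
  obtain ⟨k₀, hk₀⟩ := eventually_atTop.mp hev
  set m := max k₀ 1 with hm_def
  have hbig : ∀ k, m ≤ k → ‖A ^ k‖₊ ≤ r ^ k := by
    intro k hk
    have hk1 : 1 ≤ k := le_trans (le_max_right _ _) hk
    have hkr := hk₀ k (le_trans (le_max_left _ _) hk)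
    have hkpos : (0:ℝ) < (k:ℝ) := by exact_mod_cast hk1
    have h2 := ENNReal.rpow_lt_rpow hkr hkpos
    rw [← ENNReal.rpow_mul, one_div, inv_mul_cancel₀ hkpos.ne', ENNReal.rpow_one,
      ENNReal.rpow_natCast, ← ENNReal.coe_pow] at h2
    exact_mod_cast h2.le
  set C : ℝ := (∑ k ∈ Finset.range m, ‖A ^ k‖ / (r:ℝ) ^ k) + 1 with hC_def
  have hC0 : 0 ≤ C := by
    have : 0 ≤ ∑ k ∈ Finset.range m, ‖A ^ k‖ / (r:ℝ) ^ k :=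
      Finset.sum_nonneg fun k _ => div_nonneg (norm_nonneg _) (by positivity)
    rw [hC_def]
    linarith
  refine ⟨r, hr0, by exact_mod_cast hr1, C, hC0, fun k => ?_⟩
  rcases lt_or_ge k m with hk | hk
  · have h1 : ‖A ^ k‖ / (r:ℝ) ^ k ≤ ∑ j ∈ Finset.range m, ‖A ^ j‖ / (r:ℝ) ^ j :=
      Finset.single_le_sum (f := fun j => ‖A ^ j‖ / (r:ℝ) ^ j)
        (fun j _ => div_nonneg (norm_nonneg _) (by positivity)) (Finset.mem_range.mpr hk)
    have h2 : ‖A ^ k‖ / (r:ℝ) ^ k ≤ C := by rw [hC_def]; linarith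
    calc ‖A ^ k‖ = ‖A ^ k‖ / (r:ℝ) ^ k * (r:ℝ) ^ k := by field_simp
    _ ≤ C * (r:ℝ) ^ k := by
        exact mul_le_mul_of_nonneg_right h2 (by positivity)
  · have h1 : ‖A ^ k‖ ≤ (r:ℝ) ^ k := by
      have := hbig k hk
      rw [← NNReal.coe_le_coe] at this
      simpa using this
    have h2 : (1:ℝ) ≤ C := by
      have : 0 ≤ ∑ j ∈ Finset.range m, ‖A ^ j‖ / (r:ℝ) ^ j :=
        Finset.sum_nonneg fun j _ => div_nonneg (norm_nonneg _) (by positivity)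
      rw [hC_def]; linarith
    calc ‖A ^ k‖ ≤ (r:ℝ) ^ k := h1
    _ ≤ C * (r:ℝ) ^ k := le_mul_of_one_le_left (by positivity) h2


lemma aux_map_pow (P : Matrix (Fin N) (Fin N) ℝ) (k : ℕ) :
    (P.map Complex.ofReal) ^ k = (P ^ k).map Complex.ofReal := by
  have h1 : ∀ M : Matrix (Fin N) (Fin N) ℝ, M.map Complex.ofReal =
      Complex.ofRealHom.mapMatrix M := fun M => rfl
  rw [h1, h1, ← map_pow]

lemma aux_norm_map (M : Matrix (Fin N) (Fin N) ℝ) : ‖M.map Complex.ofReal‖ = ‖M‖ := by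
  rw [Matrix.linfty_opNorm_def, Matrix.linfty_opNorm_def]
  congr 1
  apply Finset.sup_congr rfl
  intro i _
  congr 1
  ext j
  simp [Matrix.map_apply]

/-- Geometric bound on powers from the root condition, real case. -/
lemma aux_pow_bound_real (P : Matrix (Fin N) (Fin N) ℝ)
    (h : ∀ μ ∈ (P.map Complex.ofReal).charpoly.roots, ‖μ‖ < 1) :
    ∃ r : ℝ, 0 < r ∧ r < 1 ∧ ∃ C : ℝ, 0 ≤ C ∧ ∀ k : ℕ, ‖P ^ k‖ ≤ C * r ^ k := by
  obtain ⟨r, hr0, hr1, C, hC0, hb⟩ := aux_pow_bound (P.map Complex.ofReal) h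
  exact ⟨r, hr0, hr1, C, hC0, fun k => by
    have := hb k
    rwa [aux_map_pow, aux_norm_map] at this⟩

/-- Summability of the binomial series in norm. -/
lemma aux_summable_norm (P : Matrix (Fin N) (Fin N) ℝ)
    (h : ∀ μ ∈ (P.map Complex.ofReal).charpoly.roots, ‖μ‖ < 1) (m : ℕ) :
    Summable fun k : ℕ => ‖(((m + k).choose k : ℝ)) • P ^ k‖ := by
  obtain ⟨r, hr0, hr1, C, hC0, hb⟩ := aux_pow_bound_real P h
  have hsum0 : Summable fun j : ℕ => (j:ℝ) ^ m * r ^ j := by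
    refine summable_pow_mul_geometric_of_norm_lt_one m ?_
    rw [Real.norm_eq_abs, abs_of_nonneg hr0.le]; exact hr1
  have hsum1 : Summable ((fun j : ℕ => (j:ℝ) ^ m * r ^ j) ∘ (fun k => k + m)) :=
    hsum0.comp_injective (add_left_injective m)
  have hsum2 : Summable fun k : ℕ => (C / r ^ m) * (((k + m : ℕ):ℝ) ^ m * r ^ (k + m)) :=
    hsum1.mul_left _
  refine Summable.of_nonneg_of_le (fun k => norm_nonneg _) (fun k => ?_) hsum2
  rw [norm_smul, Real.norm_eq_abs, abs_of_nonneg (by positivity : (0:ℝ) ≤ ((m + k).choose k : ℝ))]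
  have hch : ((m + k).choose k : ℝ) ≤ ((k + m : ℕ):ℝ) ^ m := by
    have h1 : (m + k).choose k = (m + k).choose m := by
      have : m ≤ m + k := Nat.le_add_right m k
      rw [← Nat.choose_symm this, Nat.add_sub_cancel_left]
    rw [h1]
    exact_mod_cast (Nat.add_comm m k ▸ Nat.choose_le_pow (m + k) m :
      (m + k).choose m ≤ (k + m) ^ m)
  calc ((m + k).choose k : ℝ) * ‖P ^ k‖ ≤ ((k + m : ℕ):ℝ) ^ m * (C * r ^ k) := by
        apply mul_le_mul hch (hb k) (norm_nonneg _) (by positivity)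
  _ = (C / r ^ m) * (((k + m : ℕ):ℝ) ^ m * r ^ (k + m)) := by
        rw [pow_add]
        field_simp


/-- Neumann series. -/
lemma aux_neumann (P : Matrix (Fin N) (Fin N) ℝ)
    (h : ∀ μ ∈ (P.map Complex.ofReal).charpoly.roots, ‖μ‖ < 1) :
    (∑' k : ℕ, P ^ k) * (1 - P) = 1 ∧ (1 - P) * (∑' k : ℕ, P ^ k) = 1 := by
  obtain ⟨r, hr0, hr1, C, hC0, hb⟩ := aux_pow_bound_real P h
  have hsumn : Summable fun k : ℕ => ‖P ^ k‖ := by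
    have := aux_summable_norm P h 0
    simpa using this
  have hs : Summable fun k : ℕ => P ^ k := hsumn.of_norm
  have hlim : Filter.Tendsto (fun k : ℕ => P ^ k) Filter.atTop (nhds 0) := by
    apply tendsto_zero_iff_norm_tendsto_zero.mpr
    refine squeeze_zero (fun k => norm_nonneg _) hb ?_
    have h1 : Filter.Tendsto (fun k : ℕ => r ^ k) Filter.atTop (nhds 0) :=
      tendsto_pow_atTop_nhds_zero_of_lt_one hr0.le hr1
    simpa using h1.const_mul C
  constructor
  · have h1 : HasSum (fun k : ℕ => P ^ k * (1 - P)) ((∑' k : ℕ, P ^ k) * (1 - P)) :=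
      hs.hasSum.mul_right _
    have h2 := h1.tendsto_sum_nat
    have h3 : ∀ mm : ℕ, ∑ k ∈ Finset.range mm, P ^ k * (1 - P) = 1 - P ^ mm := by
      intro mm
      have : ∀ k : ℕ, P ^ k * (1 - P) = P ^ k - P ^ (k + 1) := by
        intro k; rw [mul_sub, mul_one, pow_succ]
      simp_rw [this]
      rw [Finset.sum_range_sub' (fun k => P ^ k)]
      simp
    rw [funext h3] at h2
    have h4 : Filter.Tendsto (fun mm : ℕ => 1 - P ^ mm) Filter.atTop (nhds 1) := by
      have := (tendsto_const_nhds (x := (1 : Matrix (Fin N) (Fin N) ℝ))).sub hlim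
      simpa using this
    exact (tendsto_nhds_unique h2 h4).symm ▸ rfl
  · have h1 : HasSum (fun k : ℕ => (1 - P) * P ^ k) ((1 - P) * ∑' k : ℕ, P ^ k) :=
      hs.hasSum.mul_left _
    have h2 := h1.tendsto_sum_nat
    have h3 : ∀ mm : ℕ, ∑ k ∈ Finset.range mm, (1 - P) * P ^ k = 1 - P ^ mm := by
      intro mm
      have : ∀ k : ℕ, (1 - P) * P ^ k = P ^ k - P ^ (k + 1) := by
        intro k; rw [sub_mul, one_mul, pow_succ']
      simp_rw [this]
      rw [Finset.sum_range_sub' (fun k => P ^ k)]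
      simp
    rw [funext h3] at h2
    have h4 : Filter.Tendsto (fun mm : ℕ => 1 - P ^ mm) Filter.atTop (nhds 1) := by
      have := (tendsto_const_nhds (x := (1 : Matrix (Fin N) (Fin N) ℝ))).sub hlim
      simpa using this
    exact (tendsto_nhds_unique h2 h4).symm ▸ rfl

/-- The binomial series identity. -/
lemma aux_series (P : Matrix (Fin N) (Fin N) ℝ)
    (h : ∀ μ ∈ (P.map Complex.ofReal).charpoly.roots, ‖μ‖ < 1) (m : ℕ) :
    HasSum (fun k : ℕ => (((m + k).choose k : ℝ)) • P ^ k) ((∑' k : ℕ, P ^ k) ^ (m + 1)) := by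
  induction m with
  | zero =>
    have hs : Summable fun k : ℕ => P ^ k := (by simpa using aux_summable_norm P h 0 :
      Summable fun k : ℕ => ‖P ^ k‖).of_norm
    simpa using hs.hasSum
  | succ m ih =>
    have hsn := aux_summable_norm P h (m + 1)
    have hs : Summable fun k : ℕ => (((m + 1 + k).choose k : ℝ)) • P ^ k := hsn.of_norm
    rw [Summable.hasSum_iff hs]
    have hsn' := aux_summable_norm P h m
    have hsn0 : Summable fun k : ℕ => ‖P ^ k‖ := by simpa using aux_summable_norm P h 0
    have hcauchy := tsum_mul_tsum_eq_tsum_sum_antidiagonal_of_summable_norm hsn' hsn0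
    erw [ih.tsum_eq] at hcauchy
    have hs0 : Summable fun k : ℕ => P ^ k := hsn0.of_norm
    rw [hs0.hasSum.tsum_eq] at hcauchy
    have hkey : ∀ k : ℕ, ∑ kl ∈ HasAntidiagonal.antidiagonal k,
        (((m + kl.1).choose kl.1 : ℝ)) • P ^ kl.1 * P ^ kl.2
        = (((m + 1 + k).choose k : ℝ)) • P ^ k := by
      intro k
      rw [Finset.Nat.sum_antidiagonal_eq_sum_range_succ_mk]

      have h1 : ∀ i ∈ Finset.range (k + 1),
          (((m + i).choose i : ℝ)) • P ^ i * P ^ (k - i) = (((m + i).choose i : ℝ)) • P ^ k := by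
        intro i hi
        rw [smul_mul_assoc, ← pow_add]
        congr 2
        have := Finset.mem_range.mp hi
        omega
      rw [show (∑ i ∈ Finset.range (k + 1),
          (((m + (i, k - i).1).choose (i, k - i).1 : ℝ)) • P ^ (i, k - i).1 * P ^ (i, k - i).2)
          = ∑ i ∈ Finset.range (k + 1), (((m + i).choose i : ℝ)) • P ^ k from
        Finset.sum_congr rfl fun i hi => h1 i hi, ← Finset.sum_smul]
      congr 1
      have h2 : ∑ i ∈ Finset.range (k + 1), ((m + i).choose i : ℝ)
          = (((m + 1 + k).choose k : ℕ) : ℝ) := by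
        rw [← Nat.cast_sum]
        congr 1
        have h3 : ∀ i, (m + i).choose i = (i + m).choose m := by
          intro i
          rw [Nat.add_comm m i]
          have : m ≤ i + m := Nat.le_add_left m i
          rw [← Nat.choose_symm this, Nat.add_sub_cancel]
        simp_rw [h3]
        rw [Nat.sum_range_add_choose k m]
        have : m + 1 + k = k + m + 1 := by omega
        rw [this]
        have hle : m + 1 ≤ k + m + 1 := by omega
        rw [← Nat.choose_symm hle]
        congr 1
        omega
      rw [h2]
    rw [funext hkey] at hcauchy
    rw [pow_succ]
    exact hcauchy.symm


lemma aux_pow_nonneg {P : Matrix (Fin N) (Fin N) ℝ} (hP : IsNonnegMatrix P) (k : ℕ) :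
    IsNonnegMatrix (P ^ k) := by
  induction k with
  | zero => intro i j; by_cases h : i = j <;> simp [Matrix.one_apply, h]
  | succ k ih =>
    intro i j
    rw [pow_succ, Matrix.mul_apply]
    exact Finset.sum_nonneg fun l _ => mul_nonneg (ih i l) (hP l j)

/-- Entry of a `HasSum` of matrices. -/
lemma aux_hasSum_entry {f : ℕ → Matrix (Fin N) (Fin N) ℝ} {S : Matrix (Fin N) (Fin N) ℝ}
    (hf : HasSum f S) (i j : Fin N) : HasSum (fun k => f k i j) (S i j) := by
  have : Continuous fun M : Matrix (Fin N) (Fin N) ℝ => M i j := by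
    exact (continuous_apply j).comp (continuous_apply i)
  exact hf.map (AddMonoidHom.mk' (fun M : Matrix (Fin N) (Fin N) ℝ => M i j)
    (fun A B => rfl)) this

lemma aux_tsum_nonneg {f : ℕ → Matrix (Fin N) (Fin N) ℝ} {S : Matrix (Fin N) (Fin N) ℝ}
    (hf : HasSum f S) (hnn : ∀ k, IsNonnegMatrix (f k)) : IsNonnegMatrix S :=
  fun i j => (aux_hasSum_entry hf i j).nonneg fun k => hnn k i j

/-- The key spectral estimate: if `K * (t • (1 - P)) = 1` with `K, P` nonnegative and `t > 0`,
then every complex eigenvalue of `P` has modulus less than one. -/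
lemma aux_roots_lt_one {P K : Matrix (Fin N) (Fin N) ℝ} (hP : IsNonnegMatrix P)
    (hK : IsNonnegMatrix K) {t : ℝ} (ht : 0 < t)
    (hKQ : K * (t • ((1 : Matrix (Fin N) (Fin N) ℝ) - P)) = 1) :
    ∀ μ ∈ (P.map Complex.ofReal).charpoly.roots, ‖μ‖ < 1 := by
  intro μ hμ
  set A := P.map Complex.ofReal with hA_def
  rw [aux_mem_roots_iff] at hμ
  obtain ⟨x, hx0, hx⟩ := (Matrix.exists_mulVec_eq_zero_iff).mpr hμ
  have hAx : A.mulVec x = μ • x := by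
    have h1 : (μ • (1 : Matrix (Fin N) (Fin N) ℂ) - A).mulVec x
        = μ • x - A.mulVec x := by
      rw [Matrix.sub_mulVec, Matrix.smul_mulVec, Matrix.one_mulVec]
    rw [h1] at hx
    linear_combination (norm := module) -hx
  set y : Fin N → ℝ := fun i => ‖x i‖ with hy_def
  have hynn : ∀ i, 0 ≤ y i := fun i => norm_nonneg _
  obtain ⟨i₀, hi₀⟩ : ∃ i, x i ≠ 0 := Function.ne_iff.mp hx0
  have hyi₀ : 0 < y i₀ := by
    rw [hy_def]
    simpa using hi₀
  set a := ‖μ‖ with ha_def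
  by_contra hcon
  push_neg at hcon
  -- `a ≥ 1`
  have hy : ∀ i, a * y i ≤ (P.mulVec y) i := by
    intro i
    have h1 : a * y i = ‖(A.mulVec x) i‖ := by
      rw [hAx]
      simp [ha_def, hy_def, _root_.map_mul]
    rw [h1, Matrix.mulVec, dotProduct]
    calc ‖∑ j, A i j * x j‖ ≤ ∑ j, ‖A i j * x j‖ :=
          norm_sum_le _ _
    _ = (P.mulVec y) i := by
        rw [Matrix.mulVec, dotProduct]
        refine Finset.sum_congr rfl fun j _ => ?_
        rw [norm_mul]
        congr 1
        rw [hA_def]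
        simp [Matrix.map_apply, Complex.norm_real, abs_of_nonneg (hP i j)]
  -- y = K *ᵥ ((t • (1 - P)) *ᵥ y)
  have hyy : y = K.mulVec ((t • ((1 : Matrix (Fin N) (Fin N) ℝ) - P)).mulVec y) := by
    rw [Matrix.mulVec_mulVec, hKQ, Matrix.one_mulVec]
  have hz : ∀ j, ((t • ((1 : Matrix (Fin N) (Fin N) ℝ) - P)).mulVec y) j ≤ 0 := by
    intro j
    rw [Matrix.smul_mulVec, Matrix.sub_mulVec, Matrix.one_mulVec]
    have h1 : y j - (P.mulVec y) j ≤ y j - a * y j := by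
      have := hy j
      linarith
    have h2 : y j - a * y j ≤ 0 := by
      have h3 : 0 ≤ (a - 1) * y j := mul_nonneg (by linarith) (hynn j)
      nlinarith
    have h4 : y j - (P.mulVec y) j ≤ 0 := le_trans h1 h2
    simpa using mul_nonpos_of_nonneg_of_nonpos ht.le h4
  have : y i₀ ≤ 0 := by
    rw [hyy]
    rw [Matrix.mulVec, dotProduct]
    exact Finset.sum_nonpos fun j _ => mul_nonpos_of_nonneg_of_nonpos (hK i₀ j) (hz j)
  linarith


/-- Packaged facts, to be used outside this section. -/
lemma aux_package (P : Matrix (Fin N) (Fin N) ℝ)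
    (h : ∀ μ ∈ (P.map Complex.ofReal).charpoly.roots, ‖μ‖ < 1) (m : ℕ) :
    ∃ S : Matrix (Fin N) (Fin N) ℝ,
      HasSum (fun k : ℕ => P ^ k) S ∧
      S * (1 - P) = 1 ∧ (1 - P) * S = 1 ∧
      HasSum (fun k : ℕ => (((m + k).choose k : ℝ)) • P ^ k) (S ^ (m + 1)) := by
  have hs0 : Summable fun k : ℕ => P ^ k :=
    (by simpa using aux_summable_norm P h 0 : Summable fun k : ℕ => ‖P ^ k‖).of_norm
  exact ⟨∑' k : ℕ, P ^ k, hs0.hasSum, (aux_neumann P h).1, (aux_neumann P h).2,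
    aux_series P h m⟩

end Aux

theorem stmt6 (N : ℕ) (n : ℕ) (hn : 0 < n) (B : Matrix (Fin N) (Fin N) ℝ)
    (hBnn : IsNonnegMatrix B) :
    (∃ K : Matrix (Fin N) (Fin N) ℝ, IsInverseMMatrix K ∧ B = K ^ n) ↔
      ∃ c : ℝ, 0 < c ∧ ∃ P : Matrix (Fin N) (Fin N) ℝ, IsNonnegMatrix P ∧
        (∀ μ : ℂ, μ ∈ (P.map Complex.ofReal).charpoly.roots → ‖μ‖ < 1) ∧
        Summable (fun k : ℕ => (((n + k - 1).choose k : ℝ)) • P ^ k) ∧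
        B = c • ∑' k : ℕ, (((n + k - 1).choose k : ℝ)) • P ^ k := by
  have hn1 : n - 1 + 1 = n := by omega
  constructor
  · rintro ⟨K, ⟨hdet, hKnn, hZ⟩, hB⟩
    set Q := K⁻¹ with hQ_def
    have hKQ : K * Q = 1 := Matrix.mul_nonsing_inv K hdet
    set t : ℝ := 1 + ∑ i, |Q i i| with ht_def
    have hsum_abs : 0 ≤ ∑ i, |Q i i| := Finset.sum_nonneg fun i _ => abs_nonneg _
    have ht : 0 < t := by rw [ht_def]; linarith
    have htQ : ∀ i, Q i i ≤ t := by
      intro i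
      have h1 : |Q i i| ≤ ∑ j, |Q j j| :=
        Finset.single_le_sum (f := fun j => |Q j j|) (fun j _ => abs_nonneg _)
          (Finset.mem_univ i)
      have h2 := le_abs_self (Q i i)
      rw [ht_def]; linarith
    set P : Matrix (Fin N) (Fin N) ℝ := 1 - t⁻¹ • Q with hP_def
    have hsub : (1 : Matrix (Fin N) (Fin N) ℝ) - P = t⁻¹ • Q := by
      rw [hP_def, sub_sub_cancel]
    have h1P : t • ((1 : Matrix (Fin N) (Fin N) ℝ) - P) = Q := by
      rw [hsub, smul_smul, mul_inv_cancel₀ ht.ne', one_smul]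
    have hPnn : IsNonnegMatrix P := by
      intro i j
      rw [hP_def]
      by_cases hij : i = j
      · subst hij
        rw [Matrix.sub_apply, Matrix.smul_apply, Matrix.one_apply_eq, smul_eq_mul]
        have h3 : t⁻¹ * Q i i ≤ t⁻¹ * t :=
          mul_le_mul_of_nonneg_left (htQ i) (inv_nonneg.mpr ht.le)
        rw [inv_mul_cancel₀ ht.ne'] at h3
        linarith
      · rw [Matrix.sub_apply, Matrix.smul_apply, Matrix.one_apply_ne hij, smul_eq_mul]
        have h3 : Q i j ≤ 0 := hZ i j hij
        have h4 : t⁻¹ * Q i j ≤ 0 := mul_nonpos_of_nonneg_of_nonpos (inv_nonneg.mpr ht.le) h3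
        linarith
    have hroots := aux_roots_lt_one hPnn hKnn ht (by rw [h1P]; exact hKQ)
    obtain ⟨S₁, hhs, hright, hleft, hser⟩ := aux_package P hroots (n - 1)
    have hKeq : K = t⁻¹ • S₁ := by
      have h2 : K * ((1 : Matrix (Fin N) (Fin N) ℝ) - P) = t⁻¹ • (1 : Matrix (Fin N) (Fin N) ℝ) := by
        rw [hsub, mul_smul_comm, hKQ]
      calc K = K * (((1 : Matrix (Fin N) (Fin N) ℝ) - P) * S₁) := by rw [hleft, mul_one]
      _ = (K * ((1 : Matrix (Fin N) (Fin N) ℝ) - P)) * S₁ := by rw [mul_assoc]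
      _ = (t⁻¹ • (1 : Matrix (Fin N) (Fin N) ℝ)) * S₁ := by rw [h2]
      _ = t⁻¹ • S₁ := by rw [smul_mul_assoc, one_mul]
    rw [hn1] at hser
    have hfun : (fun k : ℕ => (((n + k - 1).choose k : ℝ)) • P ^ k)
        = fun k : ℕ => ((((n - 1) + k).choose k : ℝ)) • P ^ k := by
      funext k
      have : n + k - 1 = n - 1 + k := by omega
      rw [this]
    have hser' : HasSum (fun k : ℕ => (((n + k - 1).choose k : ℝ)) • P ^ k) (S₁ ^ n) := by
      rw [hfun]; exact hser
    have ht1 : (∑' k : ℕ, (((n + k - 1).choose k : ℝ)) • P ^ k) = S₁ ^ n := hser'.tsum_eq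
    refine ⟨(t⁻¹) ^ n, by positivity, P, hPnn, hroots, hser'.summable, ?_⟩
    rw [ht1, hB, hKeq, smul_pow]
  · rintro ⟨c, hc, P, hPnn, hroots, hsum, hB⟩
    obtain ⟨S₁, hhs, hright, hleft, hser⟩ := aux_package P hroots (n - 1)
    have hS1nn : IsNonnegMatrix S₁ := aux_tsum_nonneg hhs (aux_pow_nonneg hPnn)
    set d := c ^ (((n : ℕ) : ℝ))⁻¹ with hd_def
    have hd : 0 < d := Real.rpow_pos_of_pos hc _
    have hdn : d ^ n = c := Real.rpow_inv_natCast_pow hc.le hn.ne'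
    set K := d • S₁ with hK_def
    have hKinv1 : K * (d⁻¹ • ((1 : Matrix (Fin N) (Fin N) ℝ) - P)) = 1 := by
      rw [hK_def, smul_mul_assoc, mul_smul_comm, smul_smul, mul_inv_cancel₀ hd.ne', one_smul,
        hright]
    have hKdet : IsUnit K.det := IsUnit.of_mul_eq_one _
      (by rw [← Matrix.det_mul, hKinv1, Matrix.det_one])
    have hKinv : K⁻¹ = d⁻¹ • ((1 : Matrix (Fin N) (Fin N) ℝ) - P) :=
      Matrix.inv_eq_right_inv hKinv1
    refine ⟨K, ⟨hKdet, ?_, ?_⟩, ?_⟩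
    · intro i j
      rw [hK_def, Matrix.smul_apply, smul_eq_mul]
      exact mul_nonneg hd.le (hS1nn i j)
    · intro i j hij
      rw [hKinv, Matrix.smul_apply, Matrix.sub_apply, Matrix.one_apply_ne hij, smul_eq_mul]
      have h3 : (0 : ℝ) - P i j ≤ 0 := by
        have := hPnn i j; linarith
      exact mul_nonpos_of_nonneg_of_nonpos (inv_nonneg.mpr hd.le) h3
    · rw [hn1] at hser
      have hfun : (fun k : ℕ => (((n + k - 1).choose k : ℝ)) • P ^ k)
          = fun k : ℕ => ((((n - 1) + k).choose k : ℝ)) • P ^ k := by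
        funext k
        have : n + k - 1 = n - 1 + k := by omega
        rw [this]
      have hser' : HasSum (fun k : ℕ => (((n + k - 1).choose k : ℝ)) • P ^ k) (S₁ ^ n) := by
        rw [hfun]; exact hser
      have ht1 : (∑' k : ℕ, (((n + k - 1).choose k : ℝ)) • P ^ k) = S₁ ^ n := hser'.tsum_eq
      rw [hB, ht1, hK_def, smul_pow, hdn]
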